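/- Let c0 > c1 > 0, λ0, λ1 > 0, y0 ≤ 0 and y1 = −y0. Set a = 1/c0, b = 1/c1, α = λ0/c0, β = λ1/c1, A0 = (b e^{−y0} − a)^{−α−β} / B(α, β+1), A1 = (b − a e^{−y1})^{−α−β} / B(α+1, β), and define f0(t) = A0 (t−a)^{α−1} (b e^{−y0} − t)^{β} 1_{a < t < b e^{−y0}}, f1(t) = A1 (t − a e^{−y1})^{α} (b − t)^{β−1} 1_{a e^{−y1} < t < b}. Then the pair (f0, f1) satisfies the coupled integral equations: for all t with a < t < b e^{−y0}, f0(t) = α (t−a)^{α−1} ∫_{t e^{y0}}^{b} (u e^{−y0} − a)^{−α} f1(u) du; and for all t with a e^{−y1} < t < b, f1(t) = β (b−t)^{β−1} ∫_{a}^{t e^{y1}} (b − u e^{−y1})^{−β} f0(u) du. -/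

import Mathlib

open MeasureTheory intervalIntegral

lemma ae_ne' (d : ℝ) : ∀ᵐ x : ℝ, x ≠ d := by
  have h0 : (volume : Measure ℝ) {d} = 0 := measure_singleton d
  rw [Filter.eventually_iff, MeasureTheory.mem_ae_iff]
  convert h0 using 2
  ext x; simp

lemma integral_congr_Ioo' {f g : ℝ → ℝ} {c d : ℝ} (hcd : c ≤ d)
    (h : ∀ x ∈ Set.Ioo c d, f x = g x) :
    ∫ x in c..d, f x = ∫ x in c..d, g x := by
  apply intervalIntegral.integral_congr_ae
  filter_upwards [ae_ne' d] with x hx hmem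
  rw [Set.uIoc_of_le hcd, Set.mem_Ioc] at hmem
  exact h x ⟨hmem.1, lt_of_le_of_ne hmem.2 hx⟩

lemma int_sub_rpow (c b r : ℝ) (hr : 0 < r) :
    ∫ x in c..b, (b - x) ^ (r - 1) = (b - c) ^ r / r := by
  have h := intervalIntegral.integral_comp_sub_left (a := c) (b := b) (fun y => y ^ (r - 1)) b
  rw [h, sub_self, integral_rpow (Or.inl (by linarith : (-1:ℝ) < r - 1))]
  have h1 : r - 1 + 1 = r := by ring
  rw [h1, Real.zero_rpow hr.ne']
  ring

lemma int_rpow_sub' (a c r : ℝ) (hr : 0 < r) :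
    ∫ x in a..c, (x - a) ^ (r - 1) = (c - a) ^ r / r := by
  have h := intervalIntegral.integral_comp_sub_right (a := a) (b := c) (fun y => y ^ (r - 1)) a
  rw [h, sub_self, integral_rpow (Or.inl (by linarith : (-1:ℝ) < r - 1))]
  have h1 : r - 1 + 1 = r := by ring
  rw [h1, Real.zero_rpow hr.ne']
  ring

/-- The Beta function `B(x,y) = Γ(x)Γ(y)/Γ(x+y)`. -/
noncomputable def realBeta (x y : ℝ) : ℝ := Real.Gamma x * Real.Gamma y / Real.Gamma (x + y)

lemma realBeta_pos {x y : ℝ} (hx : 0 < x) (hy : 0 < y) : 0 < realBeta x y :=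
  div_pos (mul_pos (Real.Gamma_pos_of_pos hx) (Real.Gamma_pos_of_pos hy))
    (Real.Gamma_pos_of_pos (by linarith))

lemma realBeta_rec {x y : ℝ} (hx : 0 < x) (hy : 0 < y) :
    x * realBeta x (y + 1) = y * realBeta (x + 1) y := by
  unfold realBeta
  rw [Real.Gamma_add_one hy.ne', Real.Gamma_add_one hx.ne',
    show x + (y + 1) = x + y + 1 by ring, show x + 1 + y = x + y + 1 by ring]
  ring

theorem jump_telegraph_exponential_functional_integral_equations
    (c0 c1 l0 l1 y0 y1 : ℝ) (hc : c1 < c0) (hc1 : 0 < c1)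
    (hl0 : 0 < l0) (hl1 : 0 < l1) (hy0 : y0 ≤ 0) (hy1 : y1 = -y0)
    (a b α β A0 A1 : ℝ)
    (hadef : a = 1 / c0) (hbdef : b = 1 / c1)
    (hαdef : α = l0 / c0) (hβdef : β = l1 / c1)
    (hA0 : A0 = (b * Real.exp (-y0) - a) ^ (-(α + β)) / realBeta α (β + 1))
    (hA1 : A1 = (b - a * Real.exp (-y1)) ^ (-(α + β)) / realBeta (α + 1) β)
    (f0 f1 : ℝ → ℝ)
    (hf0 : ∀ t, f0 t = if a < t ∧ t < b * Real.exp (-y0) then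
        A0 * (t - a) ^ (α - 1) * (b * Real.exp (-y0) - t) ^ β else 0)
    (hf1 : ∀ t, f1 t = if a * Real.exp (-y1) < t ∧ t < b then
        A1 * (t - a * Real.exp (-y1)) ^ α * (b - t) ^ (β - 1) else 0) :
    (∀ t, a < t → t < b * Real.exp (-y0) →
      f0 t = α * (t - a) ^ (α - 1)
        * ∫ u in (t * Real.exp y0)..b, (u * Real.exp (-y0) - a) ^ (-α) * f1 u) ∧
    (∀ t, a * Real.exp (-y1) < t → t < b →
      f1 t = β * (b - t) ^ (β - 1)
        * ∫ u in a..(t * Real.exp y1), (b - u * Real.exp (-y1)) ^ (-β) * f0 u) := by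
  subst hy1
  simp only [neg_neg] at hA1 hf1 ⊢
  set E := Real.exp (-y0) with hE
  have hE0 : 0 < E := Real.exp_pos _
  have hE1 : 1 ≤ E := by rw [hE]; exact Real.one_le_exp (by linarith)
  have hEinv : Real.exp y0 = E⁻¹ := by rw [hE, Real.exp_neg, inv_inv]
  rw [hEinv] at hA1 hf1 ⊢
  have hc0 : 0 < c0 := lt_trans hc1 hc
  have ha : 0 < a := hadef ▸ by positivity
  have hb : 0 < b := hbdef ▸ by positivity
  have hab : a < b := by rw [hadef, hbdef]; exact one_div_lt_one_div_of_lt hc1 hc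
  have hα : 0 < α := hαdef ▸ div_pos hl0 hc0
  have hβ : 0 < β := hβdef ▸ div_pos hl1 hc1
  have habE : a < b * E := lt_of_lt_of_le hab (le_mul_of_one_le_right hb.le hE1)
  have hPα : (0:ℝ) < E ^ α := Real.rpow_pos_of_pos hE0 α
  have hPβ : (0:ℝ) < E ^ β := Real.rpow_pos_of_pos hE0 β
  have hB0 : 0 < realBeta α (β + 1) := realBeta_pos hα (by linarith)
  have hB1 : 0 < realBeta (α + 1) β := realBeta_pos (by linarith) hβ
  have hBeta := realBeta_rec hα hβ
  -- rewrite A1 in terms of (b*E - a)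
  have hA1' : A1 = E ^ α * E ^ β * (b * E - a) ^ (-(α + β)) / realBeta (α + 1) β := by
    rw [hA1, show b - a * E⁻¹ = E⁻¹ * (b * E - a) by field_simp,
      Real.mul_rpow (by positivity) (by linarith),
      Real.inv_rpow hE0.le, Real.rpow_neg hE0.le, inv_inv, Real.rpow_add hE0]
  constructor
  · intro t hta htb
    have htE : t * E⁻¹ < b := by
      have h := mul_lt_mul_of_pos_right htb (inv_pos.mpr hE0)
      rwa [mul_assoc, mul_inv_cancel₀ hE0.ne', mul_one] at h
    have hIoo : ∀ u ∈ Set.Ioo (t * E⁻¹) b,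
        (u * E - a) ^ (-α) * f1 u = ((E ^ α)⁻¹ * A1) * (b - u) ^ (β - 1) := by
      intro u hu
      obtain ⟨hu1, hu2⟩ := hu
      have hau : a * E⁻¹ < u :=
        lt_trans (mul_lt_mul_of_pos_right hta (inv_pos.mpr hE0)) hu1
      have hupos : 0 < u - a * E⁻¹ := by linarith
      rw [hf1 u, if_pos ⟨hau, hu2⟩,
        show u * E - a = E * (u - a * E⁻¹) by field_simp,
        Real.mul_rpow hE0.le hupos.le, Real.rpow_neg hE0.le]
      have hone : (u - a * E⁻¹) ^ (-α) * (u - a * E⁻¹) ^ α = 1 := by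
        rw [← Real.rpow_add hupos]; simp
      calc (E ^ α)⁻¹ * (u - a * E⁻¹) ^ (-α) * (A1 * (u - a * E⁻¹) ^ α * (b - u) ^ (β - 1))
          = (E ^ α)⁻¹ * A1 * (b - u) ^ (β - 1)
              * ((u - a * E⁻¹) ^ (-α) * (u - a * E⁻¹) ^ α) := by ring
        _ = (E ^ α)⁻¹ * A1 * (b - u) ^ (β - 1) := by rw [hone, mul_one]
    rw [integral_congr_Ioo' htE.le hIoo, intervalIntegral.integral_const_mul,
      int_sub_rpow _ _ _ hβ, hf0 t, if_pos ⟨hta, htb⟩,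
      show b - t * E⁻¹ = E⁻¹ * (b * E - t) by field_simp,
      Real.mul_rpow (by positivity) (by linarith),
      Real.inv_rpow hE0.le]
    have hscal : A0 = α * ((E ^ α)⁻¹ * A1 * ((E ^ β)⁻¹ / β)) := by
      rw [hA0, hA1']
      generalize (b * E - a) ^ (-(α + β)) = X
      field_simp
      linear_combination (-X) * hBeta
    linear_combination ((t - a) ^ (α - 1) * (b * E - t) ^ β) * hscal
  · intro t hta htb
    have htE : a < t * E := by
      have h := mul_lt_mul_of_pos_right hta hE0
      rwa [mul_assoc, inv_mul_cancel₀ hE0.ne', mul_one] at h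
    have htEb : t * E < b * E := mul_lt_mul_of_pos_right htb hE0
    have hIoo : ∀ u ∈ Set.Ioo a (t * E),
        (b - u * E⁻¹) ^ (-β) * f0 u = (E ^ β * A0) * (u - a) ^ (α - 1) := by
      intro u hu
      obtain ⟨hu1, hu2⟩ := hu
      have hub : u < b * E := lt_trans hu2 htEb
      have hupos : 0 < b * E - u := by linarith
      rw [hf0 u, if_pos ⟨hu1, hub⟩,
        show b - u * E⁻¹ = E⁻¹ * (b * E - u) by field_simp,
        Real.mul_rpow (by positivity) hupos.le,
        Real.inv_rpow hE0.le, Real.rpow_neg hE0.le, inv_inv, Real.rpow_neg hupos.le]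
      have hone : ((b * E - u) ^ β)⁻¹ * (b * E - u) ^ β = 1 :=
        inv_mul_cancel₀ (Real.rpow_pos_of_pos hupos β).ne'
      calc E ^ β * ((b * E - u) ^ β)⁻¹ * (A0 * (u - a) ^ (α - 1) * (b * E - u) ^ β)
          = E ^ β * A0 * (u - a) ^ (α - 1)
              * (((b * E - u) ^ β)⁻¹ * (b * E - u) ^ β) := by ring
        _ = E ^ β * A0 * (u - a) ^ (α - 1) := by rw [hone, mul_one]
    rw [integral_congr_Ioo' htE.le hIoo, intervalIntegral.integral_const_mul,
      int_rpow_sub' _ _ _ hα, hf1 t, if_pos ⟨hta, htb⟩,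
      show t * E - a = E * (t - a * E⁻¹) by field_simp,
      Real.mul_rpow hE0.le (by nlinarith [mul_pos (sub_pos.mpr hta) (inv_pos.mpr hE0)] : (0:ℝ) ≤ t - a * E⁻¹)]
    have hscal : A1 = β * (E ^ β * A0 * (E ^ α / α)) := by
      rw [hA0, hA1']
      generalize (b * E - a) ^ (-(α + β)) = X
      field_simp
      linear_combination X * hBeta
    linear_combination ((t - a * E⁻¹) ^ α * (b - t) ^ (β - 1)) * hscal
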